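/- Let h be a k-Lipschitz function, ε ≥ 0, and ν > 0. If for all x' ∈ ℒK, L(h(x'), f(x')) < ε, and L satisfies L(y,y') ≥ ν|y − y'| (for y ≠ y' in the relevant image), and L is increasing in |y − y'|, then for all x ∈ X, h(x) ≤ d̃₊(x, ℒK) + ε/ν. -/
import Mathlib


/-- Upper bound on localized hypotheses via the upper envelope: `h(x) ≤ d̃₊(x) + ε/ν`. -/
theorem stmt7 {X : Type*} [MetricSpace X] (k ε ν : ℝ) (L : ℝ → ℝ → ℝ)
    (hε : 0 ≤ ε) (hν : 0 < ν)
    (hLlow : ∀ y y', ν * |y - y'| ≤ L y y')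
    (hLmono : ∀ a b c d : ℝ, |a - b| ≤ |c - d| → L a b ≤ L c d)
    (f h : X → ℝ)
    (hh : ∀ a b, |h a - h b| ≤ k * dist a b)
    (LK : Finset X) (hLK : LK.Nonempty)
    (he : ∀ x' ∈ LK, L (h x') (f x') < ε)
    (x : X) :
    h x ≤ LK.inf' hLK (fun x' => f x' + k * dist x x') + ε / ν := by
  obtain ⟨x', hx', hinf⟩ := LK.exists_mem_eq_inf' hLK (fun x' => f x' + k * dist x x')
  rw [hinf]
  have h1 : ν * |h x' - f x'| < ε := lt_of_le_of_lt (hLlow _ _) (he x' hx')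
  have h2 : |h x' - f x'| ≤ ε / ν := le_div_iff₀' hν |>.mpr h1.le
  have h3 := hh x x'
  have := abs_le.mp h3
  have := abs_le.mp h2
  linarith
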